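/- Fix ρ ∈ 𝒞 and P ∈ 𝒫^ρ_d, and let Z be a random d-vector with law P. Then for every z ∈ ℝ^d, MD^ρ(z,P) = inf_{u ∈ S^{d−1}} E[|ψ₋(u'(Z−z))|·𝟙[u'(Z−z) ≤ 0]] / E[|ψ₋(u'(Z−z))|]. -/

import Mathlib

open MeasureTheory Set Filter Topology
open scoped RealInnerProductSpace ENNReal

noncomputable section

/-- The class `𝒞` of loss functions: convex, nonnegative, even, vanishing only at `0`. -/
def LossClass (ρ : ℝ → ℝ) : Prop :=
  ConvexOn ℝ Set.univ ρ ∧ (∀ t, 0 ≤ ρ t) ∧ (∀ t, ρ (-t) = ρ t) ∧ (∀ t, ρ t = 0 ↔ t = 0)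

/-- `ψ` is the left-derivative of `ρ`. -/
def IsLeftDeriv (ρ ψ : ℝ → ℝ) : Prop :=
  ∀ x : ℝ, HasDerivWithinAt ρ (ψ x) (Set.Iio x) x

/-- `G^ρ_Q(θ) = E_Q[|ψ₋(Y−θ)|·𝟙[Y ≤ θ]] / E_Q[|ψ₋(Y−θ)|]` (equal to `0` when the
denominator vanishes, by the Lean convention for division by zero). -/
def Gfun (ψ : ℝ → ℝ) (Q : Measure ℝ) (θ : ℝ) : ℝ :=
  (∫ y, |ψ (y - θ)| * (if y ≤ θ then 1 else 0) ∂Q) / ∫ y, |ψ (y - θ)| ∂Q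

/-- The order-`α` M-quantile `θ^ρ_α(Q) = inf{θ : G^ρ_Q(θ) ≥ α}` of a law `Q` on `ℝ`. -/
def MQuant (ψ : ℝ → ℝ) (Q : Measure ℝ) (α : ℝ) : ℝ :=
  sInf {θ : ℝ | α ≤ Gfun ψ Q θ}

/-- The pushforward `P_u` of `P` under `z ↦ u'z`. -/
def dirProj {d : ℕ} (P : Measure (EuclideanSpace ℝ (Fin d)))
    (u : EuclideanSpace ℝ (Fin d)) : Measure ℝ :=
  P.map (fun z => ⟪u, z⟫)

/-- The order-`α` M-quantile halfspace `H^ρ_{α,u}(P) = {z : u'z ≥ θ^ρ_α(P_u)}`. -/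
def MHalf {d : ℕ} (ψ : ℝ → ℝ) (P : Measure (EuclideanSpace ℝ (Fin d))) (α : ℝ)
    (u : EuclideanSpace ℝ (Fin d)) : Set (EuclideanSpace ℝ (Fin d)) :=
  {z | MQuant ψ (dirProj P u) α ≤ ⟪u, z⟫}

/-- The order-`α` M-quantile hyperplane `π^ρ_{α,u}(P) = {z : u'z = θ^ρ_α(P_u)}`. -/
def MHyp {d : ℕ} (ψ : ℝ → ℝ) (P : Measure (EuclideanSpace ℝ (Fin d))) (α : ℝ)
    (u : EuclideanSpace ℝ (Fin d)) : Set (EuclideanSpace ℝ (Fin d)) :=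
  {z | ⟪u, z⟫ = MQuant ψ (dirProj P u) α}

/-- The order-`α` M-quantile region `R^ρ_α(P) = ⋂_{u ∈ S^{d−1}} H^ρ_{α,u}(P)`. -/
def MRegion {d : ℕ} (ψ : ℝ → ℝ) (P : Measure (EuclideanSpace ℝ (Fin d))) (α : ℝ) :
    Set (EuclideanSpace ℝ (Fin d)) :=
  ⋂ u ∈ {u : EuclideanSpace ℝ (Fin d) | ‖u‖ = 1}, MHalf ψ P α u

/-- The halfspace M-depth `MD^ρ(z,P) = sup{α > 0 : z ∈ R^ρ_α(P)}` (with `sup ∅ = 0`,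
which is the Lean convention for `sSup` of the empty set of reals). -/
def MDepth {d : ℕ} (ψ : ℝ → ℝ) (P : Measure (EuclideanSpace ℝ (Fin d)))
    (z : EuclideanSpace ℝ (Fin d)) : ℝ :=
  sSup {α : ℝ | α ∈ Set.Ioo (0 : ℝ) 1 ∧ z ∈ MRegion ψ P α}

/-- The C-support `C_P = {z : P[{y : u'y ≤ u'z}] > 0 for every unit u}`. -/
def Csupport {d : ℕ} (P : Measure (EuclideanSpace ℝ (Fin d))) :
    Set (EuclideanSpace ℝ (Fin d)) :=
  {z | ∀ u : EuclideanSpace ℝ (Fin d), ‖u‖ = 1 → 0 < P {y | ⟪u, y⟫ ≤ ⟪u, z⟫}}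


structure GoodPsi (ψ : ℝ → ℝ) : Prop where
  mono : Monotone ψ
  neg : ∀ s : ℝ, s < 0 → ψ s < 0
  pos : ∀ s : ℝ, 0 < s → 0 < ψ s
  zero : ψ 0 ≤ 0
  lcont : ∀ x : ℝ, Tendsto ψ (𝓝[<] x) (𝓝 (ψ x))

theorem goodPsi_of (ρ ψ : ℝ → ℝ) (hρ : LossClass ρ) (hψ : IsLeftDeriv ρ ψ) :
    GoodPsi ψ := by
  obtain ⟨hconv, hnn, heven, hvan⟩ := hρ
  have hρ0 : ρ 0 = 0 := (hvan 0).mpr rfl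
  have hρpos : ∀ t : ℝ, t ≠ 0 → 0 < ρ t := fun t ht =>
    lt_of_le_of_ne (hnn t) (fun h => ht ((hvan t).mp h.symm))
  -- slope tendsto
  have hslope : ∀ x : ℝ, Tendsto (slope ρ x) (𝓝[<] x) (𝓝 (ψ x)) := by
    intro x
    have := hasDerivWithinAt_iff_tendsto_slope' (s := Iio x) (x := x)
      (f := ρ) (f' := ψ x) (by simp)
    exact this.mp (hψ x)
  -- secant monotone
  have hsec : ∀ a x y : ℝ, x ≠ a → y ≠ a → x ≤ y → slope ρ a x ≤ slope ρ a y := by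
    intro a x y hx hy hxy
    rw [slope_def_field, slope_def_field]
    exact hconv.secant_mono (mem_univ a) (mem_univ x) (mem_univ y) hx hy hxy
  -- ψ x ≤ slope x y for x < y
  have hA : ∀ x y : ℝ, x < y → ψ x ≤ slope ρ x y := by
    intro x y hxy
    refine le_of_tendsto (hslope x) ?_
    filter_upwards [self_mem_nhdsWithin] with w hw
    exact hsec x w y (ne_of_lt hw) (ne_of_gt hxy) (le_of_lt (lt_trans hw hxy))
  have hB : ∀ x y : ℝ, x < y → slope ρ x y ≤ ψ y := by
    intro x y hxy
    refine ge_of_tendsto (hslope y) ?_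
    have : Ioo x y ∈ 𝓝[<] y := Ioo_mem_nhdsLT_of_mem ⟨hxy, le_refl y⟩
    filter_upwards [this] with w hw
    rw [slope_comm]
    exact hsec y x w (ne_of_lt hxy) (ne_of_lt hw.2) (le_of_lt hw.1)
  have hmono : Monotone ψ := by
    intro x y hxy
    rcases eq_or_lt_of_le hxy with rfl | h
    · exact le_refl _
    · exact (hA x y h).trans (hB x y h)
  have hneg : ∀ s : ℝ, s < 0 → ψ s < 0 := by
    intro s hs
    refine lt_of_le_of_lt (hA s 0 hs) ?_
    rw [slope_def_field, hρ0]
    have : (0 - ρ s) / (0 - s) = ρ s / s := by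
      rw [zero_sub, zero_sub, neg_div_neg_eq]
    rw [this]
    exact div_neg_of_pos_of_neg (hρpos s (ne_of_lt hs)) hs
  have hpos : ∀ s : ℝ, 0 < s → 0 < ψ s := by
    intro s hs
    refine lt_of_lt_of_le ?_ (hB 0 s hs)
    rw [slope_def_field, hρ0, sub_zero, sub_zero]
    exact div_pos (hρpos s (ne_of_gt hs)) hs
  have hzero : ψ 0 ≤ 0 := by
    refine le_of_tendsto (hslope 0) ?_
    filter_upwards [self_mem_nhdsWithin] with w hw
    rw [slope_def_field, hρ0, sub_zero, sub_zero]
    exact le_of_lt (div_neg_of_pos_of_neg (hρpos w (ne_of_lt hw)) hw)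
  have hlcont : ∀ x : ℝ, Tendsto ψ (𝓝[<] x) (𝓝 (ψ x)) := by
    intro x
    have hT := hmono.tendsto_nhdsLT x
    have hbdd : BddAbove (ψ '' Iio x) := by
      refine ⟨ψ x, ?_⟩
      rintro b ⟨w, hw, rfl⟩
      exact hmono (le_of_lt hw)
    have hle : sSup (ψ '' Iio x) ≤ ψ x := by
      refine csSup_le (Nonempty.image _ nonempty_Iio) ?_
      rintro b ⟨w, hw, rfl⟩
      exact hmono (le_of_lt hw)
    have hcontρ : Tendsto ρ (𝓝[<] x) (𝓝 (ρ x)) := (hψ x).continuousWithinAt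
    have hge : ψ x ≤ sSup (ψ '' Iio x) := by
      refine le_of_tendsto (hslope x) ?_
      filter_upwards [self_mem_nhdsWithin] with w hw
      -- slope ρ x w = slope ρ w x ≤ sSup
      rw [slope_comm]
      -- slope ρ w x = lim_{s ↑ x} slope ρ w s
      have hts : Tendsto (fun s => slope ρ w s) (𝓝[<] x) (𝓝 (slope ρ w x)) := by
        simp only [slope_def_field]
        refine Tendsto.div (Tendsto.sub hcontρ tendsto_const_nhds)
          (Tendsto.sub (tendsto_id.mono_left nhdsWithin_le_nhds) tendsto_const_nhds) ?_
        exact sub_ne_zero.mpr (ne_of_gt hw)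
      refine le_of_tendsto hts ?_
      have : Ioo w x ∈ 𝓝[<] x := Ioo_mem_nhdsLT_of_mem ⟨hw, le_refl x⟩
      filter_upwards [this] with s hs
      refine (hB w s hs.1).trans ?_
      exact le_csSup hbdd (mem_image_of_mem _ hs.2)
    have : sSup (ψ '' Iio x) = ψ x := le_antisymm hle hge
    rwa [this] at hT
  exact ⟨hmono, hneg, hpos, hzero, hlcont⟩

section OneD

variable {ψ : ℝ → ℝ} {Q : Measure ℝ}

def Nfun (ψ : ℝ → ℝ) (Q : Measure ℝ) (θ : ℝ) : ℝ :=
  ∫ t, |ψ (t - θ)| * (if t ≤ θ then 1 else 0) ∂Q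

def Mfun (ψ : ℝ → ℝ) (Q : Measure ℝ) (θ : ℝ) : ℝ :=
  ∫ t, |ψ (t - θ)| * (if θ < t then 1 else 0) ∂Q

lemma meas_psi (hg : GoodPsi ψ) : Measurable ψ := hg.mono.measurable

lemma meas_absψ (hg : GoodPsi ψ) (θ : ℝ) : Measurable fun t : ℝ => |ψ (t - θ)| :=
  ((meas_psi hg).comp (measurable_id.sub_const θ)).abs

lemma meas_Nint (hg : GoodPsi ψ) (θ : ℝ) :
    Measurable fun t : ℝ => |ψ (t - θ)| * (if t ≤ θ then 1 else 0) := by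
  refine (meas_absψ hg θ).mul ?_
  exact Measurable.ite measurableSet_Iic measurable_const measurable_const

lemma meas_Mint (hg : GoodPsi ψ) (θ : ℝ) :
    Measurable fun t : ℝ => |ψ (t - θ)| * (if θ < t then 1 else 0) := by
  refine (meas_absψ hg θ).mul ?_
  exact Measurable.ite measurableSet_Ioi measurable_const measurable_const

lemma Nint_nonneg (θ t : ℝ) : 0 ≤ |ψ (t - θ)| * (if t ≤ θ then 1 else 0) := by
  positivity

lemma Mint_nonneg (θ t : ℝ) : 0 ≤ |ψ (t - θ)| * (if θ < t then 1 else 0) := by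
  positivity

variable (hg : GoodPsi ψ) (hint : ∀ θ : ℝ, Integrable (fun t => |ψ (t - θ)|) Q)

include hg hint

lemma int_Nint (θ : ℝ) :
    Integrable (fun t => |ψ (t - θ)| * (if t ≤ θ then 1 else 0)) Q := by
  refine (hint θ).mono' (meas_Nint hg θ).aestronglyMeasurable ?_
  filter_upwards with t
  rw [Real.norm_eq_abs, abs_mul, abs_abs]
  rcases le_or_gt t θ with h | h <;> simp [h, abs_of_nonneg, le_of_lt, not_le.mpr]

lemma int_Mint (θ : ℝ) :
    Integrable (fun t => |ψ (t - θ)| * (if θ < t then 1 else 0)) Q := by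
  refine (hint θ).mono' (meas_Mint hg θ).aestronglyMeasurable ?_
  filter_upwards with t
  rw [Real.norm_eq_abs, abs_mul, abs_abs]
  rcases le_or_gt t θ with h | h <;> simp [h, not_lt.mpr]

lemma N_nonneg (θ : ℝ) : 0 ≤ Nfun ψ Q θ :=
  integral_nonneg fun t => Nint_nonneg θ t

lemma M_nonneg (θ : ℝ) : 0 ≤ Mfun ψ Q θ :=
  integral_nonneg fun t => Mint_nonneg θ t

lemma D_eq_N_add_M (θ : ℝ) :
    (∫ t, |ψ (t - θ)| ∂Q) = Nfun ψ Q θ + Mfun ψ Q θ := by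
  rw [Nfun, Mfun, ← integral_add (int_Nint hg hint θ) (int_Mint hg hint θ)]
  refine integral_congr_ae (Eventually.of_forall fun t => ?_)
  rcases le_or_gt t θ with h | h <;> simp [h, not_lt.mpr, not_le.mpr]

lemma N_mono : Monotone (Nfun ψ Q) := by
  intro θ₁ θ₂ h12
  refine integral_mono (int_Nint hg hint θ₁) (int_Nint hg hint θ₂) fun t => ?_
  rcases le_or_gt t θ₁ with h | h
  · have ht2 : t ≤ θ₂ := h.trans h12
    simp only [h, ht2, if_pos, mul_one]
    have h1 : ψ (t - θ₂) ≤ ψ (t - θ₁) := hg.mono (by linarith)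
    have h2 : ψ (t - θ₁) ≤ 0 := (hg.mono (by linarith : t - θ₁ ≤ 0)).trans hg.zero
    rw [abs_of_nonpos h2, abs_of_nonpos (h1.trans h2)]
    linarith
  · simp only [not_le.mpr h, if_neg, mul_zero, if_false]
    exact Nint_nonneg θ₂ t

lemma M_anti : Antitone (Mfun ψ Q) := by
  intro θ₁ θ₂ h12
  refine integral_mono (int_Mint hg hint θ₂) (int_Mint hg hint θ₁) fun t => ?_
  rcases lt_or_ge θ₂ t with h | h
  · have ht1 : θ₁ < t := lt_of_le_of_lt h12 h
    simp only [h, ht1, if_pos, mul_one]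
    have h1 : 0 < ψ (t - θ₂) := hg.pos _ (by linarith)
    have h2 : ψ (t - θ₂) ≤ ψ (t - θ₁) := hg.mono (by linarith)
    rw [abs_of_pos h1, abs_of_pos (lt_of_lt_of_le h1 h2)]
    exact h2
  · rw [if_neg (not_lt.mpr h), mul_zero]
    exact Mint_nonneg θ₁ t

variable [IsProbabilityMeasure Q] (hnd : ∀ c : ℝ, Q {c} < 1)

include hnd

lemma D_pos (θ : ℝ) : 0 < ∫ t, |ψ (t - θ)| ∂Q := by
  rw [integral_pos_iff_support_of_nonneg (fun t => abs_nonneg _) (hint θ)]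
  have hsub : {θ}ᶜ ⊆ Function.support fun t => |ψ (t - θ)| := by
    intro t ht
    simp only [Function.mem_support, ne_eq, abs_eq_zero]
    intro h0
    rcases lt_trichotomy t θ with h | h | h
    · exact absurd h0 (ne_of_lt (hg.neg _ (by linarith)))
    · exact ht h
    · exact absurd h0 (ne_of_gt (hg.pos _ (by linarith)))
  refine lt_of_lt_of_le ?_ (measure_mono hsub)
  have h1 : Q {θ}ᶜ = 1 - Q {θ} := by
    rw [measure_compl (measurableSet_singleton θ) (measure_ne_top Q _), measure_univ]
  rw [h1]
  exact tsub_pos_of_lt (hnd θ)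

omit hnd in
lemma G_eq (θ : ℝ) : Gfun ψ Q θ = Nfun ψ Q θ / (Nfun ψ Q θ + Mfun ψ Q θ) := by
  rw [Gfun, ← D_eq_N_add_M hg hint θ]; rfl

lemma G_nonneg (θ : ℝ) : 0 ≤ Gfun ψ Q θ :=
  div_nonneg (N_nonneg hg hint θ) (le_of_lt (D_pos hg hint hnd θ))

lemma G_le_one (θ : ℝ) : Gfun ψ Q θ ≤ 1 := by
  rw [G_eq hg hint θ]
  have hD : 0 < Nfun ψ Q θ + Mfun ψ Q θ := by
    have := D_pos hg hint hnd θ; rwa [D_eq_N_add_M hg hint θ] at this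
  rw [div_le_one hD]
  linarith [M_nonneg (Q := Q) (ψ := ψ) hg hint θ]

lemma G_mono : Monotone (Gfun ψ Q) := by
  intro θ₁ θ₂ h12
  rw [G_eq hg hint θ₁, G_eq hg hint θ₂]
  have hD1 : 0 < Nfun ψ Q θ₁ + Mfun ψ Q θ₁ := by
    have := D_pos hg hint hnd θ₁; rwa [D_eq_N_add_M hg hint θ₁] at this
  have hD2 : 0 < Nfun ψ Q θ₂ + Mfun ψ Q θ₂ := by
    have := D_pos hg hint hnd θ₂; rwa [D_eq_N_add_M hg hint θ₂] at this
  rw [div_le_div_iff₀ hD1 hD2]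
  have hN := N_mono hg hint h12
  have hM := M_anti hg hint h12
  have hN1 := N_nonneg (Q := Q) hg hint θ₁
  have hM2 := M_nonneg (Q := Q) hg hint θ₂
  nlinarith

end OneD

section OneD2

variable {ψ : ℝ → ℝ} {Q : Measure ℝ}
variable (hg : GoodPsi ψ) (hint : ∀ θ : ℝ, Integrable (fun t => |ψ (t - θ)|) Q)

include hg

/-- pointwise left-limit fact: as θ ↓ θ₀, ψ (t - θ) → ψ (t - θ₀). -/
lemma psi_tendsto_right (t θ₀ : ℝ) :
    Tendsto (fun θ => ψ (t - θ)) (𝓝[>] θ₀) (𝓝 (ψ (t - θ₀))) := by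
  have h1 : Tendsto (fun θ => t - θ) (𝓝[>] θ₀) (𝓝[<] (t - θ₀)) := by
    rw [tendsto_nhdsWithin_iff]
    constructor
    · exact (tendsto_const_nhds.sub (tendsto_id.mono_left nhdsWithin_le_nhds))
    · filter_upwards [self_mem_nhdsWithin] with θ hθ
      exact sub_lt_sub_left hθ t
  exact (hg.lcont (t - θ₀)).comp h1

include hint

lemma N_tendsto_right (θ₀ : ℝ) :
    Tendsto (Nfun ψ Q) (𝓝[>] θ₀) (𝓝 (Nfun ψ Q θ₀)) := by
  refine tendsto_integral_filter_of_dominated_convergence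
    (fun t => |ψ (t - θ₀)| + |ψ (t - (θ₀ + 1))|) ?_ ?_ ?_ ?_
  · filter_upwards with θ
    exact (meas_Nint hg θ).aestronglyMeasurable
  · filter_upwards [Ioc_mem_nhdsGT_of_mem ⟨le_refl θ₀, lt_add_one θ₀⟩] with θ hθ
    filter_upwards with t
    rw [Real.norm_eq_abs, abs_mul, abs_abs]
    have hb : |ψ (t - θ)| ≤ |ψ (t - θ₀)| + |ψ (t - (θ₀ + 1))| := by
      have h1 : ψ (t - (θ₀ + 1)) ≤ ψ (t - θ) := hg.mono (by linarith [hθ.2])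
      have h2 : ψ (t - θ) ≤ ψ (t - θ₀) := hg.mono (by linarith [hθ.1])
      calc |ψ (t - θ)| ≤ max |ψ (t - (θ₀ + 1))| |ψ (t - θ₀)| := abs_le_max_abs_abs h1 h2
        _ ≤ |ψ (t - θ₀)| + |ψ (t - (θ₀ + 1))| := by
            rw [max_le_iff]; constructor <;> [linarith [abs_nonneg (ψ (t - θ₀))];
              linarith [abs_nonneg (ψ (t - (θ₀ + 1)))]]
    calc |ψ (t - θ)| * |if t ≤ θ then (1:ℝ) else 0|
        ≤ |ψ (t - θ)| * 1 := by
          gcongr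
          split <;> simp
      _ = |ψ (t - θ)| := mul_one _
      _ ≤ _ := hb
  · exact (hint θ₀).add (hint (θ₀ + 1))
  · filter_upwards with t
    rcases le_or_gt t θ₀ with h | h
    · rw [show |ψ (t - θ₀)| * (if t ≤ θ₀ then 1 else 0) = |ψ (t - θ₀)| by
        rw [if_pos h, mul_one]]
      refine Tendsto.congr' ?_ ((continuous_abs.tendsto _).comp (psi_tendsto_right hg t θ₀))
      filter_upwards [self_mem_nhdsWithin] with θ hθ
      simp only [Function.comp]
      rw [if_pos (h.trans (le_of_lt hθ)), mul_one]
    · have : ∀ θ ∈ Ioo θ₀ t, |ψ (t - θ)| * (if t ≤ θ then 1 else 0) = 0 := by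
        intro θ hθ
        rw [if_neg (not_le.mpr hθ.2), mul_zero]
      rw [show |ψ (t - θ₀)| * (if t ≤ θ₀ then 1 else 0) = 0 by
        rw [if_neg (not_le.mpr h), mul_zero]]
      refine Tendsto.congr' ?_ tendsto_const_nhds
      filter_upwards [Ioo_mem_nhdsGT_of_mem ⟨le_refl θ₀, h⟩] with θ hθ
      exact (this θ hθ).symm

end OneD2

section OneD3

variable {ψ : ℝ → ℝ} {Q : Measure ℝ}
variable (hg : GoodPsi ψ) (hint : ∀ θ : ℝ, Integrable (fun t => |ψ (t - θ)|) Q)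

include hg hint

lemma M_tendsto_right (θ₀ : ℝ) :
    Tendsto (Mfun ψ Q) (𝓝[>] θ₀) (𝓝 (Mfun ψ Q θ₀)) := by
  refine tendsto_integral_filter_of_dominated_convergence
    (fun t => |ψ (t - θ₀)| + |ψ (t - (θ₀ + 1))|) ?_ ?_ ?_ ?_
  · filter_upwards with θ
    exact (meas_Mint hg θ).aestronglyMeasurable
  · filter_upwards [Ioc_mem_nhdsGT_of_mem ⟨le_refl θ₀, lt_add_one θ₀⟩] with θ hθ
    filter_upwards with t
    rw [Real.norm_eq_abs, abs_mul, abs_abs]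
    have hb : |ψ (t - θ)| ≤ |ψ (t - θ₀)| + |ψ (t - (θ₀ + 1))| := by
      have h1 : ψ (t - (θ₀ + 1)) ≤ ψ (t - θ) := hg.mono (by linarith [hθ.2])
      have h2 : ψ (t - θ) ≤ ψ (t - θ₀) := hg.mono (by linarith [hθ.1])
      calc |ψ (t - θ)| ≤ max |ψ (t - (θ₀ + 1))| |ψ (t - θ₀)| := abs_le_max_abs_abs h1 h2
        _ ≤ |ψ (t - θ₀)| + |ψ (t - (θ₀ + 1))| := by
            rw [max_le_iff]; constructor <;> [linarith [abs_nonneg (ψ (t - θ₀))];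
              linarith [abs_nonneg (ψ (t - (θ₀ + 1)))]]
    calc |ψ (t - θ)| * |if θ < t then (1:ℝ) else 0|
        ≤ |ψ (t - θ)| * 1 := by gcongr; split <;> simp
      _ = |ψ (t - θ)| := mul_one _
      _ ≤ _ := hb
  · exact (hint θ₀).add (hint (θ₀ + 1))
  · filter_upwards with t
    rcases le_or_gt t θ₀ with h | h
    · rw [show |ψ (t - θ₀)| * (if θ₀ < t then 1 else 0) = 0 by
        rw [if_neg (not_lt.mpr h), mul_zero]]
      refine Tendsto.congr' ?_ tendsto_const_nhds
      filter_upwards [self_mem_nhdsWithin] with θ hθ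
      rw [if_neg (not_lt.mpr (h.trans (le_of_lt hθ))), mul_zero]
    · rw [show |ψ (t - θ₀)| * (if θ₀ < t then 1 else 0) = |ψ (t - θ₀)| by
        rw [if_pos h, mul_one]]
      refine Tendsto.congr' ?_ ((continuous_abs.tendsto _).comp (psi_tendsto_right hg t θ₀))
      filter_upwards [Ioo_mem_nhdsGT_of_mem ⟨le_refl θ₀, h⟩] with θ hθ
      simp only [Function.comp]
      rw [if_pos hθ.2, mul_one]

lemma M_tendsto_atTop : Tendsto (Mfun ψ Q) atTop (𝓝 0) := by
  have h0 : (0:ℝ) = ∫ _t, (0:ℝ) ∂Q := by simp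
  rw [h0]
  refine tendsto_integral_filter_of_dominated_convergence
    (fun t => |ψ (t - 0)|) ?_ ?_ ?_ ?_
  · filter_upwards with θ
    exact (meas_Mint hg θ).aestronglyMeasurable
  · filter_upwards [eventually_ge_atTop (0:ℝ)] with θ hθ
    filter_upwards with t
    rw [Real.norm_eq_abs, abs_mul, abs_abs]
    rcases lt_or_ge θ t with h | h
    · rw [if_pos h, abs_one, mul_one]
      have h1 : 0 < ψ (t - θ) := hg.pos _ (by linarith)
      have h2 : ψ (t - θ) ≤ ψ (t - 0) := hg.mono (by linarith)
      rw [abs_of_pos h1, abs_of_pos (lt_of_lt_of_le h1 h2)]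
      exact h2
    · rw [if_neg (not_lt.mpr h), abs_zero, mul_zero]
      exact abs_nonneg _
  · exact hint 0
  · filter_upwards with t
    refine Tendsto.congr' ?_ tendsto_const_nhds
    filter_upwards [eventually_ge_atTop t] with θ hθ
    rw [if_neg (not_lt.mpr hθ), mul_zero]

lemma N_tendsto_atBot : Tendsto (Nfun ψ Q) atBot (𝓝 0) := by
  have h0 : (0:ℝ) = ∫ _t, (0:ℝ) ∂Q := by simp
  rw [h0]
  refine tendsto_integral_filter_of_dominated_convergence
    (fun t => |ψ (t - 0)|) ?_ ?_ ?_ ?_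
  · filter_upwards with θ
    exact (meas_Nint hg θ).aestronglyMeasurable
  · filter_upwards [eventually_le_atBot (0:ℝ)] with θ hθ
    filter_upwards with t
    rw [Real.norm_eq_abs, abs_mul, abs_abs]
    rcases le_or_gt t θ with h | h
    · rw [if_pos h, abs_one, mul_one]
      have h1 : ψ (t - θ) ≤ 0 := (hg.mono (by linarith : t - θ ≤ 0)).trans hg.zero
      have h2 : ψ (t - 0) ≤ ψ (t - θ) := hg.mono (by linarith)
      rw [abs_of_nonpos h1, abs_of_nonpos (h2.trans h1)]
      linarith
    · rw [if_neg (not_le.mpr h), abs_zero, mul_zero]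
      exact abs_nonneg _
  · exact hint 0
  · filter_upwards with t
    refine Tendsto.congr' ?_ tendsto_const_nhds
    filter_upwards [eventually_le_atBot (t - 1)] with θ hθ
    rw [if_neg (not_le.mpr (by linarith)), mul_zero]

end OneD3

section OneD4

variable {ψ : ℝ → ℝ} {Q : Measure ℝ}
variable (hg : GoodPsi ψ) (hint : ∀ θ : ℝ, Integrable (fun t => |ψ (t - θ)|) Q)
variable [IsProbabilityMeasure Q] (hnd : ∀ c : ℝ, Q {c} < 1)

include hg hint

lemma exists_Iio_pos : ∃ a : ℝ, 0 < Q (Iio a) := by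
  by_contra h
  push_neg at h
  have h0 : ∀ a : ℝ, Q (Iio a) = 0 := fun a => le_antisymm (h a) zero_le
  have huniv : (univ : Set ℝ) = ⋃ n : ℕ, Iio (n : ℝ) := by
    ext x
    simp only [mem_univ, mem_iUnion, mem_Iio, true_iff]
    exact exists_nat_gt x
  have : Q univ = 0 := by
    rw [huniv]
    exact measure_iUnion_null fun n => h0 _
  rw [measure_univ] at this
  exact one_ne_zero this

lemma exists_Ioi_pos : ∃ a : ℝ, 0 < Q (Ioi a) := by
  by_contra h
  push_neg at h
  have h0 : ∀ a : ℝ, Q (Ioi a) = 0 := fun a => le_antisymm (h a) zero_le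
  have huniv : (univ : Set ℝ) = ⋃ n : ℕ, Ioi (-(n : ℝ)) := by
    ext x
    simp only [mem_univ, mem_iUnion, mem_Ioi, true_iff]
    obtain ⟨n, hn⟩ := exists_nat_gt (-x)
    exact ⟨n, by linarith⟩
  have : Q univ = 0 := by
    rw [huniv]
    exact measure_iUnion_null fun n => h0 _
  rw [measure_univ] at this
  exact one_ne_zero this

lemma N_pos_of (θ₀ : ℝ) (hq : 0 < Q (Iio θ₀)) : 0 < Nfun ψ Q θ₀ := by
  rw [Nfun, integral_pos_iff_support_of_nonneg (fun t => Nint_nonneg θ₀ t)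
    (int_Nint hg hint θ₀)]
  refine lt_of_lt_of_le hq (measure_mono ?_)
  intro t ht
  simp only [mem_Iio] at ht
  simp only [Function.mem_support, ne_eq]
  rw [if_pos (le_of_lt ht), mul_one]
  exact abs_ne_zero.mpr (ne_of_lt (hg.neg _ (by linarith)))

lemma M_pos_of (θ₁ : ℝ) (hq : 0 < Q (Ioi θ₁)) : 0 < Mfun ψ Q θ₁ := by
  rw [Mfun, integral_pos_iff_support_of_nonneg (fun t => Mint_nonneg θ₁ t)
    (int_Mint hg hint θ₁)]
  refine lt_of_lt_of_le hq (measure_mono ?_)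
  intro t ht
  simp only [mem_Ioi] at ht
  simp only [Function.mem_support, ne_eq]
  rw [if_pos ht, mul_one]
  exact abs_ne_zero.mpr (ne_of_gt (hg.pos _ (by linarith)))

include hnd

lemma G_tendsto_right (θ₀ : ℝ) :
    Tendsto (Gfun ψ Q) (𝓝[>] θ₀) (𝓝 (Gfun ψ Q θ₀)) := by
  have hD : 0 < Nfun ψ Q θ₀ + Mfun ψ Q θ₀ := by
    have := D_pos hg hint hnd θ₀; rwa [D_eq_N_add_M hg hint θ₀] at this
  have h1 : Tendsto (fun θ => Nfun ψ Q θ / (Nfun ψ Q θ + Mfun ψ Q θ)) (𝓝[>] θ₀)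
      (𝓝 (Nfun ψ Q θ₀ / (Nfun ψ Q θ₀ + Mfun ψ Q θ₀))) :=
    Tendsto.div (N_tendsto_right hg hint θ₀)
      ((N_tendsto_right hg hint θ₀).add (M_tendsto_right hg hint θ₀)) (ne_of_gt hD)
  have he : ∀ θ, Gfun ψ Q θ = Nfun ψ Q θ / (Nfun ψ Q θ + Mfun ψ Q θ) :=
    fun θ => G_eq hg hint θ
  rw [show Gfun ψ Q θ₀ = _ from he θ₀]
  exact h1.congr fun θ => (he θ).symm

lemma exists_G_ge {α : ℝ} (hα : α < 1) : ∃ θ : ℝ, α ≤ Gfun ψ Q θ := by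
  obtain ⟨θ₀, hθ₀⟩ := exists_Iio_pos (ψ := ψ) hg hint
  set c := Nfun ψ Q θ₀ with hc
  have hcpos : 0 < c := N_pos_of hg hint θ₀ hθ₀
  have hlim : Tendsto (fun θ => c / (c + Mfun ψ Q θ)) atTop (𝓝 1) := by
    have : Tendsto (fun θ => c + Mfun ψ Q θ) atTop (𝓝 (c + 0)) :=
      tendsto_const_nhds.add (M_tendsto_atTop hg hint)
    rw [add_zero] at this
    have h2 := Tendsto.div (tendsto_const_nhds (x := c)) this (ne_of_gt hcpos)
    rwa [div_self (ne_of_gt hcpos)] at h2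
  have hev : ∀ᶠ θ in atTop, α < c / (c + Mfun ψ Q θ) :=
    hlim.eventually (eventually_gt_nhds hα)
  obtain ⟨θ, hθge, hθα⟩ := (eventually_ge_atTop θ₀).and hev |>.exists
  refine ⟨θ, le_of_lt (lt_of_lt_of_le hθα ?_)⟩
  rw [G_eq hg hint θ]
  have hN : c ≤ Nfun ψ Q θ := N_mono hg hint hθge
  have hM : 0 ≤ Mfun ψ Q θ := M_nonneg hg hint θ
  have hD : 0 < Nfun ψ Q θ + Mfun ψ Q θ := by
    have := D_pos hg hint hnd θ; rwa [D_eq_N_add_M hg hint θ] at this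
  rw [div_le_div_iff₀ (by linarith) hD]
  nlinarith

lemma exists_G_lt {α : ℝ} (hα : 0 < α) : ∃ θ : ℝ, Gfun ψ Q θ < α := by
  obtain ⟨θ₁, hθ₁⟩ := exists_Ioi_pos (ψ := ψ) hg hint
  set c := Mfun ψ Q θ₁ with hc
  have hcpos : 0 < c := M_pos_of hg hint θ₁ hθ₁
  have hev : ∀ᶠ θ in atBot, Nfun ψ Q θ < α * c :=
    (N_tendsto_atBot hg hint).eventually (eventually_lt_nhds (by positivity))
  obtain ⟨θ, hθle, hθα⟩ := (eventually_le_atBot θ₁).and hev |>.exists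
  have hstep : Nfun ψ Q θ / c < α := by
    rw [div_lt_iff₀ hcpos]
    linarith [hθα]
  refine ⟨θ, lt_of_le_of_lt ?_ hstep⟩
  rw [G_eq hg hint θ]
  have hM : c ≤ Mfun ψ Q θ := M_anti hg hint hθle
  have hN : 0 ≤ Nfun ψ Q θ := N_nonneg hg hint θ
  exact div_le_div_of_nonneg_left hN hcpos (by linarith)

lemma quantile_le_iff {α : ℝ} (h0 : 0 < α) (h1 : α < 1) (θ₀ : ℝ) :
    MQuant ψ Q α ≤ θ₀ ↔ α ≤ Gfun ψ Q θ₀ := by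
  set S := {θ : ℝ | α ≤ Gfun ψ Q θ} with hS
  have hne : S.Nonempty := exists_G_ge hg hint hnd h1
  obtain ⟨θs, hθs⟩ := exists_G_lt hg hint hnd h0
  have hbd : BddBelow S := by
    refine ⟨θs, fun θ hθ => ?_⟩
    by_contra hlt
    push_neg at hlt
    exact absurd (le_trans hθ (G_mono hg hint hnd (le_of_lt hlt))) (not_le.mpr hθs)
  constructor
  · intro hq
    have hq' : α ≤ Gfun ψ Q (sInf S) := by
      refine ge_of_tendsto (G_tendsto_right hg hint hnd (sInf S)) ?_
      filter_upwards [self_mem_nhdsWithin] with θ hθ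
      obtain ⟨s, hsS, hs⟩ := exists_lt_of_csInf_lt hne hθ
      exact le_trans hsS (G_mono hg hint hnd (le_of_lt hs))
    exact le_trans hq' (G_mono hg hint hnd hq)
  · intro h
    exact csInf_le hbd h

end OneD4

lemma sSup_aux {I : ℝ} (h0 : 0 ≤ I) (h1 : I ≤ 1) :
    sSup {α : ℝ | α ∈ Ioo (0:ℝ) 1 ∧ α ≤ I} = I := by
  rcases eq_or_lt_of_le h0 with h | h
  · have he : {α : ℝ | α ∈ Ioo (0:ℝ) 1 ∧ α ≤ I} = ∅ := by
      ext α
      simp only [mem_setOf_eq, mem_Ioo, mem_empty_iff_false, iff_false, not_and]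
      intro hα hα1
      linarith [hα.1]
    rw [he, Real.sSup_empty, h]
  · apply le_antisymm
    · exact Real.sSup_le (fun α hα => hα.2) h0
    · refine le_of_forall_lt fun w hw => ?_
      set m := max w (I / 2) with hm
      have hmI : m < I := max_lt hw (by linarith)
      set α := (m + I) / 2 with hα
      have hαmem : α ∈ {α : ℝ | α ∈ Ioo (0:ℝ) 1 ∧ α ≤ I} := by
        constructor
        · constructor
          · have : I / 2 ≤ m := le_max_right _ _
            simp only [hα]; linarith
          · simp only [hα]; linarith
        · simp only [hα]; linarith
      have hbdd : BddAbove {α : ℝ | α ∈ Ioo (0:ℝ) 1 ∧ α ≤ I} :=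
        ⟨1, fun β hβ => le_of_lt hβ.1.2⟩
      have : w < α := by
        have : w ≤ m := le_max_left _ _
        simp only [hα]; linarith
      exact lt_of_lt_of_le this (le_csSup hbdd hαmem)

theorem stmt_11 {d : ℕ} (hd : 0 < d) (ρ ψ : ℝ → ℝ) (hρ : LossClass ρ)
    (hψ : IsLeftDeriv ρ ψ)
    (P : Measure (EuclideanSpace ℝ (Fin d))) [IsProbabilityMeasure P]
    (hP1 : ∀ u : EuclideanSpace ℝ (Fin d), ‖u‖ = 1 → ∀ c : ℝ, P {z | ⟪u, z⟫ = c} < 1)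
    (hP2 : ∀ u : EuclideanSpace ℝ (Fin d), ‖u‖ = 1 → ∀ θ : ℝ,
      Integrable (fun t => |ψ (t - θ)|) (dirProj P u)) :
    ∀ z : EuclideanSpace ℝ (Fin d),
      MDepth ψ P z =
        ⨅ u : {u : EuclideanSpace ℝ (Fin d) // ‖u‖ = 1},
          (∫ y, |ψ ⟪u.1, y - z⟫| * (if ⟪u.1, y - z⟫ ≤ 0 then 1 else 0) ∂P) /
            ∫ y, |ψ ⟪u.1, y - z⟫| ∂P := by
  intro z
  have hg : GoodPsi ψ := goodPsi_of ρ ψ hρ hψ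
  haveI : Nonempty {u : EuclideanSpace ℝ (Fin d) // ‖u‖ = 1} := by
    refine ⟨⟨EuclideanSpace.single ⟨0, hd⟩ (1:ℝ), ?_⟩⟩
    rw [EuclideanSpace.norm_single]
    simp
  have hmeasu : ∀ u : EuclideanSpace ℝ (Fin d),
      Measurable fun y : EuclideanSpace ℝ (Fin d) => ⟪u, y⟫ :=
    fun u => (continuous_const.inner continuous_id).measurable
  haveI hprob : ∀ u : EuclideanSpace ℝ (Fin d), IsProbabilityMeasure (dirProj P u) :=
    fun u => Measure.isProbabilityMeasure_map (hmeasu u).aemeasurable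
  have hnd : ∀ u : EuclideanSpace ℝ (Fin d), ‖u‖ = 1 → ∀ c : ℝ,
      dirProj P u {c} < 1 := by
    intro u hu c
    rw [dirProj, Measure.map_apply (hmeasu u) (measurableSet_singleton c)]
    exact hP1 u hu c
  -- G function for each direction
  set G : {u : EuclideanSpace ℝ (Fin d) // ‖u‖ = 1} → ℝ :=
    fun u => Gfun ψ (dirProj P u.1) ⟪u.1, z⟫ with hGdef
  -- change of variables
  have hcov : ∀ u : {u : EuclideanSpace ℝ (Fin d) // ‖u‖ = 1},
      ((∫ y, |ψ ⟪u.1, y - z⟫| * (if ⟪u.1, y - z⟫ ≤ 0 then 1 else 0) ∂P) /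
        ∫ y, |ψ ⟪u.1, y - z⟫| ∂P) = G u := by
    rintro ⟨u, hu⟩
    haveI := hprob u
    have hnum : (∫ y, |ψ ⟪u, y - z⟫| * (if ⟪u, y - z⟫ ≤ 0 then 1 else 0) ∂P)
        = ∫ t, |ψ (t - ⟪u, z⟫)| * (if t ≤ ⟪u, z⟫ then 1 else 0) ∂(dirProj P u) := by
      rw [dirProj, integral_map (hmeasu u).aemeasurable
        (meas_Nint hg ⟪u, z⟫).aestronglyMeasurable]
      refine integral_congr_ae (Eventually.of_forall fun y => ?_)
      simp only [inner_sub_right, sub_nonpos]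
    have hden : (∫ y, |ψ ⟪u, y - z⟫| ∂P)
        = ∫ t, |ψ (t - ⟪u, z⟫)| ∂(dirProj P u) := by
      rw [dirProj, integral_map (hmeasu u).aemeasurable
        (meas_absψ hg ⟪u, z⟫).aestronglyMeasurable]
      refine integral_congr_ae (Eventually.of_forall fun y => ?_)
      simp only [inner_sub_right]
    rw [hnum, hden]
    rfl
  have hIeq : (⨅ u : {u : EuclideanSpace ℝ (Fin d) // ‖u‖ = 1},
      (∫ y, |ψ ⟪u.1, y - z⟫| * (if ⟪u.1, y - z⟫ ≤ 0 then 1 else 0) ∂P) /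
        ∫ y, |ψ ⟪u.1, y - z⟫| ∂P) = ⨅ u, G u := iInf_congr hcov
  rw [hIeq]
  have hGnn : ∀ u, 0 ≤ G u := fun u => by
    haveI := hprob u.1
    exact G_nonneg hg (hP2 u.1 u.2) (hnd u.1 u.2) _
  have hbddG : BddBelow (range G) := by
    refine ⟨0, ?_⟩
    rintro _ ⟨u, rfl⟩
    exact hGnn u
  have hI0 : 0 ≤ ⨅ u, G u := Real.iInf_nonneg hGnn
  have hI1 : (⨅ u, G u) ≤ 1 := by
    obtain ⟨u⟩ := (inferInstance : Nonempty {u : EuclideanSpace ℝ (Fin d) // ‖u‖ = 1})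
    refine ciInf_le_of_le hbddG u ?_
    haveI := hprob u.1
    exact G_le_one hg (hP2 u.1 u.2) (hnd u.1 u.2) _
  have hset : {α : ℝ | α ∈ Ioo (0:ℝ) 1 ∧ z ∈ MRegion ψ P α}
      = {α : ℝ | α ∈ Ioo (0:ℝ) 1 ∧ α ≤ ⨅ u, G u} := by
    ext α
    simp only [mem_setOf_eq, and_congr_right_iff]
    intro hα
    have hreg : z ∈ MRegion ψ P α ↔
        ∀ u : {u : EuclideanSpace ℝ (Fin d) // ‖u‖ = 1},
          MQuant ψ (dirProj P u.1) α ≤ ⟪u.1, z⟫ := by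
      simp only [MRegion, mem_iInter, MHalf, mem_setOf_eq]
      exact ⟨fun h u => h u.1 u.2, fun h u hu => h ⟨u, hu⟩⟩
    rw [hreg]
    have hqu : ∀ u : {u : EuclideanSpace ℝ (Fin d) // ‖u‖ = 1},
        (MQuant ψ (dirProj P u.1) α ≤ ⟪u.1, z⟫ ↔ α ≤ G u) := fun u => by
      haveI := hprob u.1
      exact quantile_le_iff hg (hP2 u.1 u.2) (hnd u.1 u.2) hα.1 hα.2 _
    constructor
    · intro h
      exact (le_ciInf_iff hbddG).mpr fun u => (hqu u).mp (h u)
    · intro h u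
      exact (hqu u).mpr (le_ciInf_iff hbddG |>.mp h u)
  rw [MDepth, hset, sSup_aux hI0 hI1]
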